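/- For every real number d with √2 ≤ d ≤ 2, the lattice L_d can be covered by closed unit disks with pairwise disjoint interiors. -/
import Mathlib


/-- The square lattice `(dℤ) × (dℤ)` in the Euclidean plane. -/
def squareLattice (d : ℝ) : Set (EuclideanSpace ℝ (Fin 2)) :=
  {p | ∃ m n : ℤ, p 0 = d * m ∧ p 1 = d * n}

/-- A set `S ⊆ ℝ²` is coverable by closed unit disks with pairwise disjoint interiors:
there is a family of centers with pairwise distances at least `2` such that `S` is
contained in the union of the closed unit balls about the centers. -/
def CoverableByUnitDisks (S : Set (EuclideanSpace ℝ (Fin 2))) : Prop :=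
  ∃ (ι : Type) (c : ι → EuclideanSpace ℝ (Fin 2)),
    (∀ i j, i ≠ j → 2 ≤ dist (c i) (c j)) ∧
    S ⊆ ⋃ i, Metric.closedBall (c i) 1

lemma key_int_ineq (a b : ℤ) (h : a ≠ 0 ∨ b ≠ 0) : 2 ≤ (2*a+b)^2 + b^2 := by
  rcases eq_or_ne b 0 with hb|hb
  · subst hb
    have ha : a ≠ 0 := h.resolve_right (by simp)
    have : 1 ≤ a^2 := by rcases lt_or_gt_of_ne ha with h|h <;> nlinarith
    nlinarith
  · have hb2 : 1 ≤ b^2 := by rcases lt_or_gt_of_ne hb with h|h <;> nlinarith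
    rcases eq_or_ne (2*a+b) 0 with hc|hc
    · have hb4 : 4 ≤ b^2 := by
        have hba : b = -2*a := by omega
        have ha : a ≠ 0 := by omega
        have : 1 ≤ a^2 := by rcases lt_or_gt_of_ne ha with h|h <;> nlinarith
        rw [hba]; nlinarith
      nlinarith [sq_nonneg (2*a+b)]
    · have : 1 ≤ (2*a+b)^2 := by rcases lt_or_gt_of_ne hc with h|h <;> nlinarith
      linarith

/-- Staggered disk centers: row `n` is shifted by `n·d`, each disk covers a pair of points. -/
noncomputable def ctr (d : ℝ) (p : ℤ × ℤ) : EuclideanSpace ℝ (Fin 2) :=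
  (WithLp.equiv 2 (Fin 2 → ℝ)).symm ![d * (2*p.1 + p.2) + d/2, d * p.2]

lemma ctr0 (d : ℝ) (p : ℤ × ℤ) : ctr d p 0 = d * (2*p.1 + p.2) + d/2 := rfl
lemma ctr1 (d : ℝ) (p : ℤ × ℤ) : ctr d p 1 = d * p.2 := rfl

lemma dist_two (x y : EuclideanSpace ℝ (Fin 2)) :
    dist x y = Real.sqrt ((x 0 - y 0)^2 + (x 1 - y 1)^2) := by
  rw [EuclideanSpace.dist_eq, Fin.sum_univ_two]
  norm_num [sq, Real.dist_eq, abs_mul_abs_self]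

theorem lattice_coverable_interval7 (d : ℝ)
    (hd : d ∈ Set.Icc (Real.sqrt 2) 2) :
    CoverableByUnitDisks (squareLattice d) := by
  obtain ⟨h1, h2⟩ := hd
  have hd0 : (0:ℝ) ≤ d := le_trans (Real.sqrt_nonneg 2) h1
  have hdsq : 2 ≤ d^2 := by nlinarith [Real.sq_sqrt (show (0:ℝ) ≤ 2 by norm_num), h1, Real.sqrt_nonneg 2]
  refine ⟨ℤ × ℤ, ctr d, ?_, ?_⟩
  · rintro ⟨m, n⟩ ⟨m', n'⟩ hij
    rw [dist_two, ctr0, ctr0, ctr1, ctr1]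
    have hab : (m - m' ≠ 0) ∨ (n - n' ≠ 0) := by
      by_contra h
      push_neg at h
      exact hij (by simp only [Prod.mk.injEq]; omega)
    have hk := key_int_ineq (m - m') (n - n') hab
    have hk' : (2:ℝ) ≤ (2*((m:ℝ)-m')+((n:ℝ)-n'))^2 + ((n:ℝ)-n')^2 := by exact_mod_cast hk
    have h4 : (4:ℝ) ≤ ((d*(2*(m:ℝ)+n)+d/2) - (d*(2*(m':ℝ)+n')+d/2))^2
        + (d*(n:ℝ) - d*n')^2 := by
      have e : ((d*(2*(m:ℝ)+n)+d/2) - (d*(2*(m':ℝ)+n')+d/2))^2 + (d*(n:ℝ) - d*n')^2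
          = d^2 * ((2*((m:ℝ)-m')+((n:ℝ)-n'))^2 + ((n:ℝ)-n')^2) := by ring
      rw [e]; nlinarith
    calc (2:ℝ) = Real.sqrt 4 := by
          rw [show (4:ℝ) = 2^2 by norm_num, Real.sqrt_sq (by norm_num : (0:ℝ) ≤ 2)]
      _ ≤ _ := Real.sqrt_le_sqrt (by push_cast; linarith)
  · rintro p ⟨k, n, hp0, hp1⟩
    rcases Int.even_or_odd (k - n) with ⟨m, hm⟩ | ⟨m, hm⟩
    · refine Set.mem_iUnion.2 ⟨(m, n), ?_⟩
      rw [Metric.mem_closedBall, dist_two, hp0, hp1, ctr0, ctr1]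
      have hk : (k:ℝ) = 2*m + n := by exact_mod_cast (show k = 2*m + n by omega)
      have e : (d*(k:ℝ) - (d*(2*(m:ℝ)+n)+d/2))^2 + (d*(n:ℝ) - d*n)^2 = (d/2)^2 := by
        rw [hk]; ring
      rw [show ((d*(k:ℝ) - (d*(2*(m:ℝ)+n)+d/2))^2 + (d*(n:ℝ) - d*n)^2) = (d/2)^2 from e,
        Real.sqrt_sq (by positivity)]
      linarith
    · refine Set.mem_iUnion.2 ⟨(m, n), ?_⟩
      rw [Metric.mem_closedBall, dist_two, hp0, hp1, ctr0, ctr1]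
      have hk : (k:ℝ) = 2*m + 1 + n := by exact_mod_cast (show k = 2*m + 1 + n by omega)
      have e : (d*(k:ℝ) - (d*(2*(m:ℝ)+n)+d/2))^2 + (d*(n:ℝ) - d*n)^2 = (d/2)^2 := by
        rw [hk]; ring
      rw [show ((d*(k:ℝ) - (d*(2*(m:ℝ)+n)+d/2))^2 + (d*(n:ℝ) - d*n)^2) = (d/2)^2 from e,
        Real.sqrt_sq (by positivity)]
      linarith
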